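/- For A > 0, the function ℓ ↦ y(1/2, ℓ) defined by y(1/2,ℓ) = (1-ℓ) cosh(√(Aℓ)) + A[1/4 + (1/A - 1/2)ℓ + ℓ²/4] · sinh(√(Aℓ))/√(Aℓ), for 0 < ℓ < 1, has derivative (∂y/∂ℓ)(1/2,ℓ) = (A(ℓ-1)² - 4ℓ)(cosh√(Aℓ) - sinh(√(Aℓ))/√(Aℓ))/(8ℓ), and this derivative vanishes on (0,1) exactly at ℓ = A/(1+√(1+A))². -/

import Mathlib

open Set Real

-- key inequality: sinh s < s * cosh s for s > 0
lemma sinh_lt_mul_cosh_aux {s : ℝ} (hs : 0 < s) : Real.sinh s < s * Real.cosh s := by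
  have hmono : StrictMonoOn (fun x : ℝ => x * Real.cosh x - Real.sinh x) (Set.Ici 0) := by
    apply strictMonoOn_of_deriv_pos (convex_Ici 0)
    · fun_prop
    · intro x hx
      rw [interior_Ici] at hx
      have hx0 : 0 < x := hx
      have hd : HasDerivAt (fun x : ℝ => x * Real.cosh x - Real.sinh x)
          (1 * Real.cosh x + x * Real.sinh x - Real.cosh x) x :=
        ((hasDerivAt_id x).mul (Real.hasDerivAt_cosh x)).sub (Real.hasDerivAt_sinh x)
      rw [hd.deriv]
      have := Real.sinh_pos_iff.2 hx0
      nlinarith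
  have := hmono (Set.mem_Ici.2 le_rfl) (Set.mem_Ici.2 hs.le) hs
  simpa using this

theorem derivative_of_pulse_value
    (A : ℝ) (hA : 0 < A) :
    ∀ ℓ ∈ Ioo (0:ℝ) 1,
      HasDerivAt
        (fun l : ℝ => (1 - l) * Real.cosh (Real.sqrt (A * l))
          + A * (1/4 + (1/A - 1/2) * l + l^2 / 4)
              * (Real.sinh (Real.sqrt (A * l)) / Real.sqrt (A * l)))
        ((A * (ℓ - 1)^2 - 4 * ℓ)
          * (Real.cosh (Real.sqrt (A * ℓ)) - Real.sinh (Real.sqrt (A * ℓ)) / Real.sqrt (A * ℓ))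
          / (8 * ℓ)) ℓ
      ∧ ((A * (ℓ - 1)^2 - 4 * ℓ)
          * (Real.cosh (Real.sqrt (A * ℓ)) - Real.sinh (Real.sqrt (A * ℓ)) / Real.sqrt (A * ℓ))
          / (8 * ℓ) = 0
        ↔ ℓ = A / (1 + Real.sqrt (1 + A))^2) := by
  rintro ℓ ⟨hl0, hl1⟩
  have hAl : 0 < A * ℓ := mul_pos hA hl0
  set s := Real.sqrt (A * ℓ) with hsdef
  have hs : 0 < s := Real.sqrt_pos.2 hAl
  have hs2 : s ^ 2 = A * ℓ := Real.sq_sqrt hAl.le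
  constructor
  · -- the derivative
    have h1 : HasDerivAt (fun l : ℝ => A * l) A ℓ := by
      simpa using (hasDerivAt_id ℓ).const_mul A
    have h2 : HasDerivAt (fun l : ℝ => Real.sqrt (A * l)) (1 / (2 * s) * A) ℓ :=
      (Real.hasDerivAt_sqrt (ne_of_gt hAl)).comp ℓ h1
    have hcosh : HasDerivAt (fun l : ℝ => Real.cosh (Real.sqrt (A * l)))
        (Real.sinh s * (1 / (2 * s) * A)) ℓ := h2.cosh
    have hsinh : HasDerivAt (fun l : ℝ => Real.sinh (Real.sqrt (A * l)))
        (Real.cosh s * (1 / (2 * s) * A)) ℓ := h2.sinh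
    have hdiv : HasDerivAt (fun l : ℝ => Real.sinh (Real.sqrt (A * l)) / Real.sqrt (A * l))
        ((Real.cosh s * (1 / (2 * s) * A) * s - Real.sinh s * (1 / (2 * s) * A)) / s ^ 2) ℓ :=
      hsinh.div h2 (ne_of_gt hs)
    have hlin : HasDerivAt (fun l : ℝ => 1 - l) (-1) ℓ := by
      simpa using (hasDerivAt_id ℓ).const_sub 1
    have hP : HasDerivAt (fun l : ℝ => A * (1/4 + (1/A - 1/2) * l + l^2 / 4))
        (A * ((1/A - 1/2) + 2 * ℓ / 4)) ℓ := by
      have h3 : HasDerivAt (fun l : ℝ => 1/4 + (1/A - 1/2) * l + l^2 / 4)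
          ((1/A - 1/2) + 2 * ℓ / 4) ℓ := by
        have ha : HasDerivAt (fun l : ℝ => 1/4 + (1/A - 1/2) * l) (1/A - 1/2) ℓ := by
          simpa using ((hasDerivAt_id ℓ).const_mul (1/A - 1/2)).const_add (1/4 : ℝ)
        have hb : HasDerivAt (fun l : ℝ => l^2 / 4) (2 * ℓ / 4) ℓ := by
          simpa using (hasDerivAt_pow 2 ℓ).div_const 4
        exact ha.add hb
      simpa using h3.const_mul A
    have hD := (hlin.mul hcosh).add (hP.mul hdiv)
    refine hD.congr_deriv ?_
    rw [← hsdef]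
    have hA' : A = s ^ 2 / ℓ := by rw [eq_div_iff hl0.ne']; linarith [hs2]
    rw [hA']
    field_simp
    ring
  · -- the iff
    set t := Real.sqrt (1 + A) with htdef
    have ht2 : t ^ 2 = 1 + A := Real.sq_sqrt (by linarith)
    have ht1 : 1 < t := by
      rw [show (1:ℝ) = Real.sqrt 1 by simp [Real.sqrt_one]]
      exact Real.sqrt_lt_sqrt (by norm_num) (by linarith)
    have hC : 0 < Real.cosh s - Real.sinh s / s := by
      have := sinh_lt_mul_cosh_aux hs
      rw [sub_pos, div_lt_iff₀ hs]
      linarith [this]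
    constructor
    · intro h
      have hN : A * (ℓ - 1)^2 - 4 * ℓ = 0 := by
        have h8 : (8:ℝ) * ℓ ≠ 0 := by positivity
        rw [div_eq_zero_iff] at h
        rcases h with h | h
        · rcases mul_eq_zero.1 h with h | h
          · exact h
          · exact absurd h (ne_of_gt hC)
        · exact absurd h h8
      -- solve the quadratic
      have key : (A * ℓ - (t - 1)^2) * (A * ℓ - (t + 1)^2) = 0 := by
        linear_combination A * hN + (t^2 - 1 + A - 2 * A * ℓ) * ht2
      rcases mul_eq_zero.1 key with hk | hk
      · have hAl' : A * ℓ = (t - 1)^2 := by linarith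
        have hne : (1 + t)^2 ≠ 0 := by positivity
        field_simp
        nlinarith [hAl', ht2]
      · exfalso
        have : A * ℓ < A := by nlinarith
        nlinarith [ht2, ht1]
    · intro h
      have hne : (1 + t)^2 ≠ 0 := by positivity
      have hℓ : ℓ * (1 + t)^2 = A := by
        rw [h]; field_simp
      have htne : t + 1 ≠ 0 := by positivity
      have hz : (t + 1) * (ℓ * (t + 1) - (t - 1)) = 0 := by linear_combination hℓ - ht2
      have hℓ2 : ℓ * (t + 1) = t - 1 := by
        rcases mul_eq_zero.1 hz with h' | h'
        · exact absurd h' htne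
        · linarith
      have hℓ3 : ℓ = (t - 1) / (t + 1) := by
        rw [eq_div_iff htne]; exact hℓ2
      have hA3 : A = t ^ 2 - 1 := by linarith [ht2]
      have hN : A * (ℓ - 1)^2 - 4 * ℓ = 0 := by
        rw [hℓ3, hA3]; field_simp; ring
      rw [hN, zero_mul, zero_div]
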